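/- Let K be a shellable pure (n−1)-dimensional simplicial complex with shelling σ₁,…,σ_s and partial complexes K_j = ∪_{i≤j} 2^{σ_i}, with restriction faces r(σ_j). Then for any subset ω ⊆ [m], the relative simplicial cohomology H^i((K_j)_ω, (K_{j−1})_ω; Z) is Z (generated by the dual of r(σ_j)) if ω ∩ σ_j = r(σ_j) and i = dim r(σ_j), and is 0 otherwise. -/

import Mathlib

open Finset
open scoped Classical

noncomputable section

/-- `KF σ j τ`: `τ` is a face of `K_j = 2^{σ₁} ∪ … ∪ 2^{σ_j}` (0-based: faces contained
in some `σ i` with `i < j`). -/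
def KF {s : ℕ} (σ : Fin s → Finset ℕ) (j : ℕ) (τ : Finset ℕ) : Prop :=
  ∃ i : Fin s, (i : ℕ) < j ∧ τ ⊆ σ i

/-- The relative faces of the pair `((K_j)_ω, (K_{j−1})_ω)` of cardinality `c`
(a face of cardinality `c` lies in simplicial degree `c − 1`). -/
def RelFace {s : ℕ} (σ : Fin s → Finset ℕ) (j : ℕ) (ω : Finset ℕ) (c : ℕ) : Type :=
  {τ : Finset ℕ // (τ ⊆ ω ∧ KF σ (j + 1) τ ∧ ¬ KF σ j τ) ∧ τ.card = c}

/-- Relative simplicial cochains of the pair in cardinality `c`. -/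
abbrev RelCochain {s : ℕ} (σ : Fin s → Finset ℕ) (j : ℕ) (ω : Finset ℕ) (c : ℕ) : Type :=
  RelFace σ j ω c → ℤ

/-- The relative simplicial coboundary (orientations from the natural order on the
vertices): `(δφ)(τ) = Σ_{v∈τ} (−1)^{|{x∈τ : x<v}|} φ(τ∖v)`, where faces outside the
relative complex contribute `0`. -/
def relDelta {s : ℕ} (σ : Fin s → Finset ℕ) (j : ℕ) (ω : Finset ℕ) (c : ℕ)
    (φ : RelCochain σ j ω c) : RelCochain σ j ω (c + 1) :=
  fun τ =>
    ∑ v ∈ τ.1.attach,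
      if h : (τ.1.erase v.1 ⊆ ω ∧ KF σ (j + 1) (τ.1.erase v.1) ∧ ¬ KF σ j (τ.1.erase v.1)) then
        (-1 : ℤ) ^ ((τ.1.filter (· < v.1)).card) *
          φ ⟨τ.1.erase v.1, h, by
            rw [Finset.card_erase_of_mem v.2, τ.2.2]; omega⟩
      else 0

/-- The cochain dual to a face `r` (in cardinality `|r|`). -/
def dualCochain {s : ℕ} (σ : Fin s → Finset ℕ) (j : ℕ) (ω : Finset ℕ) (c : ℕ)
    (r : Finset ℕ) : RelCochain σ j ω c :=
  fun τ => if τ.1 = r then 1 else 0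


/-- The face predicate of the relative pair. -/
abbrev Pf {s : ℕ} (σ : Fin s → Finset ℕ) (j : ℕ) (ω : Finset ℕ) (τ : Finset ℕ) : Prop :=
  τ ⊆ ω ∧ KF σ (j + 1) τ ∧ ¬ KF σ j τ

/-- Extension of a relative cochain to all finsets (zero outside the relative faces). -/
def extC {s : ℕ} {σ : Fin s → Finset ℕ} {j : ℕ} {ω : Finset ℕ} {c : ℕ}
    (φ : RelCochain σ j ω c) : Finset ℕ → ℤ :=
  fun U => if h : Pf σ j ω U ∧ U.card = c then φ ⟨U, h⟩ else 0

lemma extC_ne {s : ℕ} {σ : Fin s → Finset ℕ} {j : ℕ} {ω : Finset ℕ} {c : ℕ}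
    (φ : RelCochain σ j ω c) {U : Finset ℕ} (h : ¬ Pf σ j ω U) : extC φ U = 0 :=
  dif_neg fun hc => h hc.1

lemma extC_zero {s : ℕ} {σ : Fin s → Finset ℕ} {j : ℕ} {ω : Finset ℕ} {c : ℕ}
    (U : Finset ℕ) : extC (fun _ => (0 : ℤ) : RelCochain σ j ω c) U = 0 := by
  unfold extC; split_ifs <;> rfl

lemma relDelta_val {s : ℕ} (σ : Fin s → Finset ℕ) (j : ℕ) (ω : Finset ℕ) {c : ℕ}
    (φ : RelCochain σ j ω c) (T : Finset ℕ) (hP : Pf σ j ω T) (hc : T.card = c + 1) :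
    relDelta σ j ω c φ ⟨T, hP, hc⟩ =
      ∑ x ∈ T, (-1 : ℤ) ^ ((T.filter (· < x)).card) * extC φ (T.erase x) := by
  unfold relDelta
  rw [← Finset.sum_attach T (fun x => (-1 : ℤ) ^ ((T.filter (· < x)).card) * extC φ (T.erase x))]
  refine Finset.sum_congr rfl fun x _ => ?_
  by_cases hPE : Pf σ j ω (T.erase x.1)
  · have hce : (T.erase x.1).card = c := by
      rw [Finset.card_erase_of_mem x.2, hc]; omega
    rw [dif_pos hPE, show extC φ (T.erase x.1) = φ ⟨T.erase x.1, hPE, hce⟩ from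
      dif_pos ⟨hPE, hce⟩]
  · rw [dif_neg hPE, extC_ne φ hPE, mul_zero]

/-- The contracting homotopy (cone operator with apex `v`). -/
def Hmap {s : ℕ} (σ : Fin s → Finset ℕ) (j : ℕ) (ω : Finset ℕ) (v : ℕ) (c : ℕ)
    (φ : RelCochain σ j ω (c + 1)) : RelCochain σ j ω c :=
  fun τ => if h : v ∉ τ.1 ∧ Pf σ j ω (insert v τ.1) then
      (-1 : ℤ) ^ ((τ.1.filter (· < v)).card) *
        φ ⟨insert v τ.1, h.2, by rw [Finset.card_insert_of_notMem h.1, τ.2.2]⟩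
    else 0

lemma Hmap_val {s : ℕ} (σ : Fin s → Finset ℕ) (j : ℕ) (ω : Finset ℕ) (v : ℕ) (c : ℕ)
    (φ : RelCochain σ j ω (c + 1)) (T : Finset ℕ) (hP : Pf σ j ω T) (hc : T.card = c) :
    Hmap σ j ω v c φ ⟨T, hP, hc⟩ =
      if v ∈ T then 0 else (-1 : ℤ) ^ ((T.filter (· < v)).card) * extC φ (insert v T) := by
  unfold Hmap
  by_cases hv : v ∈ T
  · rw [dif_neg (fun h => h.1 hv), if_pos hv]
  · rw [if_neg hv]
    by_cases hPI : Pf σ j ω (insert v T)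
    · have hci : (insert v T).card = c + 1 := by
        rw [Finset.card_insert_of_notMem hv, hc]
      rw [dif_pos ⟨hv, hPI⟩, show extC φ (insert v T) = φ ⟨insert v T, hPI, hci⟩ from
        dif_pos ⟨hPI, hci⟩]
    · rw [dif_neg (fun h => hPI h.2), extC_ne φ hPI, mul_zero]

lemma Hmap_zero {s : ℕ} (σ : Fin s → Finset ℕ) (j : ℕ) (ω : Finset ℕ) (v : ℕ) (c : ℕ)
    (τ : RelFace σ j ω c) : Hmap σ j ω v c (fun _ => 0) τ = 0 := by
  unfold Hmap; split_ifs <;> simp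

lemma relDelta_zero {s : ℕ} (σ : Fin s → Finset ℕ) (j : ℕ) (ω : Finset ℕ) (c : ℕ)
    (τ : RelFace σ j ω (c + 1)) : relDelta σ j ω c (fun _ => 0) τ = 0 := by
  obtain ⟨T, hP, hc⟩ := τ
  rw [relDelta_val σ j ω _ T hP hc]
  exact Finset.sum_eq_zero fun x _ => by rw [extC_zero, mul_zero]

lemma face_iff {s : ℕ} (σ : Fin s → Finset ℕ) (j : Fin s) (ω : Finset ℕ) (r : Finset ℕ)
    (hsh : ∀ τ : Finset ℕ, τ ⊆ σ j → ((¬ ∃ i : Fin s, i < j ∧ τ ⊆ σ i) ↔ r ⊆ τ))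
    (τ : Finset ℕ) :
    Pf σ (j : ℕ) ω τ ↔ r ⊆ τ ∧ τ ⊆ ω ∩ σ j := by
  constructor
  · rintro ⟨h1, ⟨i, hi, h2⟩, h3⟩
    have hij : i = j := by
      have hn : ¬ (i : ℕ) < (j : ℕ) := fun hlt => h3 ⟨i, hlt, h2⟩
      exact Fin.ext (by omega)
    subst hij
    refine ⟨(hsh τ h2).1 ?_, Finset.subset_inter h1 h2⟩
    rintro ⟨k, hk, hks⟩
    exact h3 ⟨k, hk, hks⟩
  · rintro ⟨h1, h2⟩
    have hτσ : τ ⊆ σ j := h2.trans Finset.inter_subset_right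
    refine ⟨h2.trans Finset.inter_subset_left, ⟨j, by omega, hτσ⟩, ?_⟩
    rintro ⟨k, hk, hks⟩
    exact ((hsh τ hτσ).2 h1) ⟨k, hk, hks⟩

lemma cancel0 (a : ℕ) (t : ℤ) : (-1 : ℤ) ^ a * ((-1 : ℤ) ^ a * t) = t := by
  rw [← mul_assoc, ← pow_add]
  rw [Even.neg_one_pow ⟨a, rfl⟩, one_mul]

lemma cancel1 (a b : ℕ) (t : ℤ) :
    (-1 : ℤ) ^ a * ((-1 : ℤ) ^ b * t) + (-1 : ℤ) ^ (b + 1) * ((-1 : ℤ) ^ a * t) = 0 := by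
  rw [pow_succ]; ring

lemma cancel2 (a b : ℕ) (t : ℤ) :
    (-1 : ℤ) ^ a * ((-1 : ℤ) ^ b * t) + (-1 : ℤ) ^ b * ((-1 : ℤ) ^ (a + 1) * t) = 0 := by
  rw [pow_succ]; ring

/-- The homotopy identity `δ ∘ h + h ∘ δ = id`, valid when the relative faces are
exactly the `τ` with `r ⊆ τ ⊆ A` and `v ∈ A \ r` is a cone point. -/
lemma homotopy_id {s : ℕ} (σ : Fin s → Finset ℕ) (j : ℕ) (ω : Finset ℕ)
    (r A : Finset ℕ) (v : ℕ)
    (hface : ∀ τ : Finset ℕ, Pf σ j ω τ ↔ r ⊆ τ ∧ τ ⊆ A)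
    (hv : v ∈ A) (hvr : v ∉ r) (c : ℕ) (φ : RelCochain σ j ω (c + 1))
    (τ : RelFace σ j ω (c + 1)) :
    relDelta σ j ω c (Hmap σ j ω v c φ) τ
      + Hmap σ j ω v (c + 1) (relDelta σ j ω (c + 1) φ) τ = φ τ := by
  obtain ⟨T, hPT, hcT⟩ := τ
  have hrT : r ⊆ T := ((hface T).1 hPT).1
  have hTA : T ⊆ A := ((hface T).1 hPT).2
  have hext : ∀ U : Finset ℕ, U.card = c →
      extC (Hmap σ j ω v c φ) U =
        if v ∈ U then 0 else (-1 : ℤ) ^ ((U.filter (· < v)).card) * extC φ (insert v U) := by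
    intro U hU
    by_cases hPU : Pf σ j ω U
    · rw [show extC (Hmap σ j ω v c φ) U = Hmap σ j ω v c φ ⟨U, hPU, hU⟩ from
        dif_pos ⟨hPU, hU⟩]
      exact Hmap_val σ j ω v c φ U hPU hU
    · rw [extC_ne _ hPU]
      by_cases hvU : v ∈ U
      · rw [if_pos hvU]
      · rw [if_neg hvU, extC_ne, mul_zero]
        intro hPI
        apply hPU
        rw [hface] at hPI ⊢
        obtain ⟨h1, h2⟩ := hPI
        rw [Finset.subset_insert_iff_of_notMem hvr] at h1
        exact ⟨h1, (Finset.subset_insert v U).trans h2⟩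
  rw [relDelta_val σ j ω _ T hPT hcT, Hmap_val σ j ω v (c + 1) _ T hPT hcT]
  by_cases hvT : v ∈ T
  · rw [if_pos hvT, add_zero]
    have hsum : ∀ x ∈ T, x ≠ v →
        (-1 : ℤ) ^ ((T.filter (· < x)).card) * extC (Hmap σ j ω v c φ) (T.erase x) = 0 := by
      intro x hx hxv
      rw [hext _ (by rw [Finset.card_erase_of_mem hx, hcT]; omega),
        if_pos (Finset.mem_erase.2 ⟨Ne.symm hxv, hvT⟩), mul_zero]
    rw [Finset.sum_eq_single_of_mem v hvT hsum,
      hext _ (by rw [Finset.card_erase_of_mem hvT, hcT]; omega),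
      if_neg (Finset.notMem_erase v T), Finset.insert_erase hvT,
      show (T.erase v).filter (· < v) = T.filter (· < v) by
        have hnm : v ∉ T.filter (· < v) := fun hm => lt_irrefl v (Finset.mem_filter.1 hm).2
        rw [Finset.filter_erase, Finset.erase_eq_of_notMem hnm],
      cancel0]
    exact dif_pos ⟨hPT, hcT⟩
  · rw [if_neg hvT]
    have hPI : Pf σ j ω (insert v T) :=
      (hface _).2 ⟨hrT.trans (Finset.subset_insert v T), Finset.insert_subset hv hTA⟩
    have hci : (insert v T).card = c + 1 + 1 := by
      rw [Finset.card_insert_of_notMem hvT, hcT]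
    rw [show extC (relDelta σ j ω (c + 1) φ) (insert v T) =
        relDelta σ j ω (c + 1) φ ⟨insert v T, hPI, hci⟩ from dif_pos ⟨hPI, hci⟩,
      relDelta_val σ j ω φ (insert v T) hPI hci, Finset.sum_insert hvT,
      Finset.erase_insert hvT,
      show (insert v T).filter (· < v) = T.filter (· < v) by
        rw [Finset.filter_insert, if_neg (lt_irrefl v)],
      show (∑ x ∈ T, (-1 : ℤ) ^ ((T.filter (· < x)).card)
            * extC (Hmap σ j ω v c φ) (T.erase x))
          = ∑ x ∈ T, (-1 : ℤ) ^ ((T.filter (· < x)).card) *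
              ((-1 : ℤ) ^ (((T.erase x).filter (· < v)).card) * extC φ (insert v (T.erase x)))
        from Finset.sum_congr rfl fun x hx => by
          rw [hext _ (by rw [Finset.card_erase_of_mem hx, hcT]; omega),
            if_neg fun hm => hvT (Finset.mem_of_mem_erase hm)],
      mul_add, cancel0, Finset.mul_sum, add_comm (extC φ T), ← add_assoc,
      ← Finset.sum_add_distrib]
    have hzero : ∀ x ∈ T,
        ((-1 : ℤ) ^ ((T.filter (· < x)).card) *
            ((-1 : ℤ) ^ (((T.erase x).filter (· < v)).card) * extC φ (insert v (T.erase x)))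
          + (-1 : ℤ) ^ ((T.filter (· < v)).card) *
            ((-1 : ℤ) ^ (((insert v T).filter (· < x)).card)
              * extC φ ((insert v T).erase x))) = 0 := by
      intro x hx
      have hxv : x ≠ v := fun h => hvT (h ▸ hx)
      rw [Finset.erase_insert_of_ne (Ne.symm hxv)]
      by_cases hxr : x ∈ r
      · rw [extC_ne φ (fun hP => by
          have h1 := ((hface _).1 hP).1
          rw [Finset.subset_insert_iff_of_notMem hvr] at h1
          exact (Finset.subset_erase.1 h1).2 hxr)]
        ring
      · rcases lt_or_gt_of_ne hxv with hlt | hgt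
        · rw [show ((insert v T).filter (· < x)).card = (T.filter (· < x)).card by
              rw [Finset.filter_insert, if_neg (lt_asymm hlt)],
            show (T.filter (· < v)).card = ((T.erase x).filter (· < v)).card + 1 by
              have hxm : x ∈ T.filter (· < v) := Finset.mem_filter.2 ⟨hx, hlt⟩
              have hpos : 0 < (T.filter (· < v)).card := Finset.card_pos.2 ⟨x, hxm⟩
              rw [Finset.filter_erase, Finset.card_erase_of_mem hxm]
              omega]
          exact cancel1 _ _ _
        · rw [show ((insert v T).filter (· < x)).card = (T.filter (· < x)).card + 1 by
              rw [Finset.filter_insert, if_pos hgt,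
                Finset.card_insert_of_notMem fun hm => hvT (Finset.mem_of_mem_filter _ hm)],
            show ((T.erase x).filter (· < v)).card = (T.filter (· < v)).card by
              have hnm : x ∉ T.filter (· < v) :=
                fun hm => (lt_asymm hgt) (Finset.mem_filter.1 hm).2
              rw [Finset.filter_erase, Finset.erase_eq_of_notMem hnm]]
          exact cancel2 _ _ _
    rw [Finset.sum_eq_zero hzero, zero_add]
    exact dif_pos ⟨hPT, hcT⟩

/-- Lemma 6.6: let `K` be a pure `(n−1)`-dimensional shellable complex
with shelling `σ₀,…,σ_{s−1}` and restriction faces `r i` (the new faces of `K_i` are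
exactly the faces `τ ⊆ σ i` with `r i ⊆ τ`).  Then for any `ω`, the relative cohomology
`H^*((K_j)_ω, (K_{j−1})_ω)` is `ℤ`, generated by the class of the dual of `r j`, in
(cardinality) degree `|r j|` when `ω ∩ σ j = r j`, and vanishes otherwise.  The
conclusion is stated at the cochain level: in cardinality `c`, cocycles modulo
coboundaries form `ℤ·[r j]*` if `ω ∩ σ j = r j` and `c = |r j|`, and vanish otherwise. -/
theorem shelling_relative_cohomology
    (s n : ℕ) (σ : Fin s → Finset ℕ)
    (hpure : ∀ i, (σ i).card = n)
    (r : Fin s → Finset ℕ)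
    (hrsub : ∀ i, r i ⊆ σ i)
    (hshell : ∀ (jj : Fin s) (τ : Finset ℕ), τ ⊆ σ jj →
      ((¬ ∃ i : Fin s, i < jj ∧ τ ⊆ σ i) ↔ r jj ⊆ τ))
    (j : Fin s) (ω : Finset ℕ) :
    -- degree 0 (faces of cardinality 0, i.e. the empty face):
    ((ω ∩ σ j = r j ∧ r j = ∅ →
        (∀ φ : RelCochain σ (j : ℕ) ω 0, relDelta σ (j : ℕ) ω 0 φ = 0 →
          ∃! a : ℤ, φ = fun τ => a * dualCochain σ (j : ℕ) ω 0 (r j) τ)) ∧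
      (¬ (ω ∩ σ j = r j ∧ r j = ∅) →
        ∀ φ : RelCochain σ (j : ℕ) ω 0, relDelta σ (j : ℕ) ω 0 φ = 0 → φ = 0)) ∧
    -- positive degrees (faces of cardinality c + 1):
    (∀ c : ℕ,
      ((ω ∩ σ j = r j ∧ (r j).card = c + 1 →
          relDelta σ (j : ℕ) ω (c + 1) (dualCochain σ (j : ℕ) ω (c + 1) (r j)) = 0 ∧
          (∀ φ : RelCochain σ (j : ℕ) ω (c + 1), relDelta σ (j : ℕ) ω (c + 1) φ = 0 →
            ∃ (a : ℤ) (ψ : RelCochain σ (j : ℕ) ω c),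
              φ = (fun τ => a * dualCochain σ (j : ℕ) ω (c + 1) (r j) τ)
                    + relDelta σ (j : ℕ) ω c ψ) ∧
          (∀ (a : ℤ) (ψ : RelCochain σ (j : ℕ) ω c),
            (fun τ => a * dualCochain σ (j : ℕ) ω (c + 1) (r j) τ)
                = relDelta σ (j : ℕ) ω c ψ → a = 0)) ∧
        (¬ (ω ∩ σ j = r j ∧ (r j).card = c + 1) →
          ∀ φ : RelCochain σ (j : ℕ) ω (c + 1), relDelta σ (j : ℕ) ω (c + 1) φ = 0 →
            ∃ ψ : RelCochain σ (j : ℕ) ω c, φ = relDelta σ (j : ℕ) ω c ψ))) := by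
  classical
  have hface : ∀ τ : Finset ℕ, Pf σ (j : ℕ) ω τ ↔ r j ⊆ τ ∧ τ ⊆ ω ∩ σ j :=
    face_iff σ j ω (r j) (hshell j)
  have hsubs : ∀ {c : ℕ} (τ : RelFace σ (j : ℕ) ω c), r j ⊆ τ.1 ∧ τ.1 ⊆ ω ∩ σ j :=
    fun τ => (hface τ.1).1 τ.2.1
  refine ⟨⟨?_, ?_⟩, fun c => ⟨?_, ?_⟩⟩
  · -- degree 0, ω ∩ σ j = r j = ∅
    rintro ⟨hA, hre⟩ φ _
    have hfe : Pf σ (j : ℕ) ω ∅ := (hface ∅).2 ⟨by rw [hre], Finset.empty_subset _⟩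
    have he : ∀ τ : RelFace σ (j : ℕ) ω 0, τ = ⟨∅, hfe, Finset.card_empty⟩ :=
      fun τ => Subtype.ext (Finset.card_eq_zero.1 τ.2.2)
    refine ⟨φ ⟨∅, hfe, Finset.card_empty⟩, ?_, ?_⟩
    · funext τ
      rw [he τ]
      simp [dualCochain, hre]
    · intro b hb
      have := congrFun hb ⟨∅, hfe, Finset.card_empty⟩
      simp [dualCochain, hre] at this
      exact this.symm
  · -- degree 0, otherwise: cocycles vanish
    intro hn φ hδ
    by_cases hre : r j = ∅
    · have hAne : ω ∩ σ j ≠ r j := fun h => hn ⟨h, hre⟩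
      have hA : (ω ∩ σ j).Nonempty := by
        rcases Finset.eq_empty_or_nonempty (ω ∩ σ j) with h | h
        · exact absurd (h.trans hre.symm) hAne
        · exact h
      obtain ⟨v, hvA⟩ := hA
      have hfv : Pf σ (j : ℕ) ω {v} :=
        (hface _).2 ⟨by rw [hre]; exact Finset.empty_subset _,
          Finset.singleton_subset_iff.2 hvA⟩
      have hfe : Pf σ (j : ℕ) ω ∅ := (hface ∅).2 ⟨by rw [hre], Finset.empty_subset _⟩
      have h0 := congrFun hδ ⟨{v}, hfv, Finset.card_singleton v⟩
      rw [relDelta_val σ (j : ℕ) ω φ {v} hfv (Finset.card_singleton v),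
        Finset.sum_singleton, Finset.erase_singleton,
        show ({v} : Finset ℕ).filter (· < v) = ∅ by
          rw [Finset.filter_singleton, if_neg (lt_irrefl v)],
        show extC φ ∅ = φ ⟨∅, hfe, Finset.card_empty⟩ from
          dif_pos ⟨hfe, Finset.card_empty⟩] at h0
      simp only [Finset.card_empty, pow_zero, one_mul, Pi.zero_apply] at h0
      funext τ
      rw [show τ = ⟨∅, hfe, Finset.card_empty⟩ from Subtype.ext (Finset.card_eq_zero.1 τ.2.2)]
      exact h0
    · -- r j ≠ ∅ : no faces of cardinality 0
      funext τ
      exact absurd (Finset.subset_empty.1 ((Finset.card_eq_zero.1 τ.2.2) ▸ (hsubs τ).1)) hre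
  · -- positive degree, ω ∩ σ j = r j, |r j| = c + 1
    rintro ⟨hA, hrc⟩
    have hfr : Pf σ (j : ℕ) ω (r j) :=
      (hface _).2 ⟨Finset.Subset.rfl, hA ▸ Finset.Subset.rfl⟩
    have huniq : ∀ {c' : ℕ} (τ : RelFace σ (j : ℕ) ω c'), τ.1 = r j := fun τ =>
      Finset.Subset.antisymm (hA ▸ (hsubs τ).2) (hsubs τ).1
    refine ⟨?_, ?_, ?_⟩
    · funext τ
      have h1 : τ.1.card = c + 1 + 1 := τ.2.2
      rw [huniq τ, hrc] at h1
      omega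
    · intro φ _
      refine ⟨φ ⟨r j, hfr, hrc⟩, fun _ => 0, ?_⟩
      funext τ
      rw [Pi.add_apply, relDelta_zero, show τ = ⟨r j, hfr, hrc⟩ from Subtype.ext (huniq τ)]
      simp [dualCochain]
    · intro a ψ h
      have hev := congrFun h ⟨r j, hfr, hrc⟩
      rw [relDelta_val σ (j : ℕ) ω ψ (r j) hfr hrc,
        Finset.sum_eq_zero (fun x hx => ?_)] at hev
      · simpa [dualCochain] using hev
      · rw [extC_ne ψ fun hcond => (Finset.subset_erase.1 ((hface _).1 hcond).1).2 hx,
          mul_zero]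
  · -- positive degree, otherwise: cocycles are coboundaries
    intro hn φ hδ
    by_cases hrA : r j ⊆ ω ∩ σ j
    · by_cases hAr : ω ∩ σ j = r j
      · -- only possible face is `r j`, but it has the wrong cardinality
        refine ⟨fun _ => 0, ?_⟩
        funext τ
        have h1 : τ.1.card = c + 1 := τ.2.2
        have h2 : τ.1 = r j :=
          Finset.Subset.antisymm (hAr ▸ (hsubs τ).2) (hsubs τ).1
        exact absurd ⟨hAr, by rw [← h2, h1]⟩ hn
      · -- there is a cone point `v ∈ (ω ∩ σ j) \ r j`
        have hss : r j ⊂ ω ∩ σ j := _root_.ssubset_iff_subset_ne.2 ⟨hrA, fun h => hAr h.symm⟩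
        obtain ⟨v, hvA, hvr⟩ := Finset.exists_of_ssubset hss
        refine ⟨Hmap σ (j : ℕ) ω v c φ, ?_⟩
        funext τ
        have hkey := homotopy_id σ (j : ℕ) ω (r j) (ω ∩ σ j) v hface hvA hvr c φ τ
        rw [hδ, show Hmap σ (j : ℕ) ω v (c + 1) 0 τ = 0 from Hmap_zero σ (j : ℕ) ω v (c + 1) τ,
          add_zero] at hkey
        exact hkey.symm
    · -- no faces at all
      refine ⟨fun _ => 0, ?_⟩
      funext τ
      exact absurd ((hsubs τ).1.trans (hsubs τ).2) hrA

end
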